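/- Let $H$ be a Hopf algebra, $R$ a coalgebra in ${}^H_H\mathcal{YD}$ with braiding $c$, and $x, y \in R$ such that $c\,\Delta_R(x) = \Delta_R(x)$, $c\,\Delta_R(y) = \Delta_R(y)$, and $(R\otimes c^2\otimes R)(\Delta_R\otimes\Delta_R)(x\otimes y) = (\Delta_R\otimes\Delta_R)(x\otimes y)$. Then for any left $H$-linear map $\omega : R\otimes R \to K$ and any linear map $\mu : R\otimes R \to R$, one has $(\omega * \mu)(x\otimes y) = (\mu * \omega)(x\otimes y)$. -/
import Mathlib


open TensorProduct

section Defs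

variable {K H R : Type*} [CommRing K] [Ring H] [HopfAlgebra K H]
  [AddCommGroup R] [Module K R] [Coalgebra K R]

/-- The Yetter-Drinfeld braiding `c(v ⊗ w) = v₍₋₁₎ · w ⊗ v₍₀₎` on `R ⊗ R`. -/
noncomputable def braidRR (act : (H ⊗[K] R) →ₗ[K] R) (ρ : R →ₗ[K] H ⊗[K] R) :
    (R ⊗[K] R) →ₗ[K] R ⊗[K] R :=
  (TensorProduct.map act LinearMap.id) ∘ₗ
  (TensorProduct.assoc K H R R).symm.toLinearMap ∘ₗ
  (TensorProduct.map LinearMap.id (TensorProduct.comm K R R).toLinearMap) ∘ₗ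
  (TensorProduct.assoc K H R R).toLinearMap ∘ₗ
  (TensorProduct.map ρ LinearMap.id)

/-- Apply a map `f : R ⊗ R → R ⊗ R` to the two middle tensorands of
`(R ⊗ R) ⊗ (R ⊗ R)`. -/
noncomputable def midMap (f : (R ⊗[K] R) →ₗ[K] R ⊗[K] R) :
    ((R ⊗[K] R) ⊗[K] (R ⊗[K] R)) →ₗ[K] (R ⊗[K] R) ⊗[K] (R ⊗[K] R) :=
  (TensorProduct.assoc K R R (R ⊗[K] R)).symm.toLinearMap ∘ₗ
  (TensorProduct.map LinearMap.id (TensorProduct.assoc K R R R).toLinearMap) ∘ₗ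
  (TensorProduct.map LinearMap.id (TensorProduct.map f LinearMap.id)) ∘ₗ
  (TensorProduct.map LinearMap.id (TensorProduct.assoc K R R R).symm.toLinearMap) ∘ₗ
  (TensorProduct.assoc K R R (R ⊗[K] R)).toLinearMap

/-- The comultiplication `Δ_{R⊗R} = (id ⊗ c ⊗ id) ∘ (Δ_R ⊗ Δ_R)` of the coalgebra
`R ⊗ R` in `{}^H_H 𝒴𝒟`. -/
noncomputable def comulRR (act : (H ⊗[K] R) →ₗ[K] R) (ρ : R →ₗ[K] H ⊗[K] R) :
    (R ⊗[K] R) →ₗ[K] (R ⊗[K] R) ⊗[K] (R ⊗[K] R) :=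
  midMap (braidRR act ρ) ∘ₗ (TensorProduct.map Coalgebra.comul Coalgebra.comul)

/-- The diagonal action `h · (r ⊗ s) = h₁·r ⊗ h₂·s` of `H` on `R ⊗ R`. -/
noncomputable def actRR (act : (H ⊗[K] R) →ₗ[K] R) :
    (H ⊗[K] (R ⊗[K] R)) →ₗ[K] R ⊗[K] R :=
  (TensorProduct.map act act) ∘ₗ
  (TensorProduct.tensorTensorTensorComm K H H R R).toLinearMap ∘ₗ
  (TensorProduct.map Coalgebra.comul LinearMap.id)

end Defs


set_option linter.unusedSectionVars false

/- ==================== auxiliary development ==================== -/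

section Aux

variable (K : Type*) [CommRing K]

/-- `(a ⊗ b) ⊗ m ↦ (a ⊗ m) ⊗ b`. -/
noncomputable def st16exch (A B M : Type*) [AddCommGroup A] [Module K A]
    [AddCommGroup B] [Module K B] [AddCommGroup M] [Module K M] :
    ((A ⊗[K] B) ⊗[K] M) →ₗ[K] (A ⊗[K] M) ⊗[K] B :=
  (TensorProduct.assoc K A M B).symm.toLinearMap ∘ₗ
  (TensorProduct.map LinearMap.id (TensorProduct.comm K B M).toLinearMap) ∘ₗ
  (TensorProduct.assoc K A B M).toLinearMap

@[simp] lemma st16exch_tmul {A B M : Type*} [AddCommGroup A] [Module K A]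
    [AddCommGroup B] [Module K B] [AddCommGroup M] [Module K M]
    (a : A) (b : B) (m : M) :
    st16exch K A B M ((a ⊗ₜ[K] b) ⊗ₜ[K] m) = (a ⊗ₜ[K] m) ⊗ₜ[K] b := by
  simp [st16exch]

end Aux

section Aux2

variable {K H R : Type*} [CommRing K] [Ring H] [HopfAlgebra K H]
  [AddCommGroup R] [Module K R] [Coalgebra K R]

lemma braidRR_tmul (act : (H ⊗[K] R) →ₗ[K] R) (ρ : R →ₗ[K] H ⊗[K] R) (u v : R) :
    braidRR act ρ (u ⊗ₜ[K] v) =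
      (TensorProduct.map act LinearMap.id) (st16exch K H R R (ρ u ⊗ₜ[K] v)) := by
  simp [braidRR, st16exch]

/-- `a ⊗ ((b ⊗ p) ⊗ q) ↦ (a ⊗ b) ⊗ (p ⊗ q)`. -/
noncomputable def st16Mid :
    (R ⊗[K] ((R ⊗[K] R) ⊗[K] R)) →ₗ[K] (R ⊗[K] R) ⊗[K] (R ⊗[K] R) :=
  (TensorProduct.assoc K R R (R ⊗[K] R)).symm.toLinearMap ∘ₗ
  (TensorProduct.map LinearMap.id (TensorProduct.assoc K R R R).toLinearMap)

@[simp] lemma st16Mid_tmul (a b p q : R) :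
    st16Mid (a ⊗ₜ[K] ((b ⊗ₜ[K] p) ⊗ₜ[K] q)) = (a ⊗ₜ[K] b) ⊗ₜ[K] (p ⊗ₜ[K] q) := by
  simp [st16Mid]

lemma midMap_Mid (f : (R ⊗[K] R) →ₗ[K] R ⊗[K] R) (a q : R) (X : R ⊗[K] R) :
    midMap f (st16Mid (a ⊗ₜ[K] (X ⊗ₜ[K] q))) = st16Mid (a ⊗ₜ[K] (f X ⊗ₜ[K] q)) := by
  induction X using TensorProduct.induction_on with
  | zero => simp
  | tmul u v => simp [midMap, st16Mid]
  | add s t hs ht =>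
    simp only [add_tmul, tmul_add, map_add] at hs ht ⊢
    rw [hs, ht]

lemma midMap_comp (f g : (R ⊗[K] R) →ₗ[K] R ⊗[K] R) :
    midMap (K := K) (f ∘ₗ g) = midMap f ∘ₗ midMap g := by
  apply TensorProduct.ext_fourfold'
  intro a b p q
  have h : (a ⊗ₜ[K] b) ⊗ₜ[K] (p ⊗ₜ[K] q) = st16Mid (a ⊗ₜ[K] ((b ⊗ₜ[K] p) ⊗ₜ[K] q)) := by
    simp
  rw [LinearMap.comp_apply, h, midMap_Mid, midMap_Mid, midMap_Mid, LinearMap.comp_apply]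

end Aux2

set_option linter.unusedSectionVars false

section Aux3

variable {K H R : Type*} [CommRing K] [Ring H] [HopfAlgebra K H]
  [AddCommGroup R] [Module K R] [Coalgebra K R]

/-- `c_{R, R⊗R}` : `v ⊗ w ↦ v₍₋₁₎·w ⊗ v₍₀₎`, with the diagonal action on `R ⊗ R`. -/
noncomputable def st16c1 (act : (H ⊗[K] R) →ₗ[K] R) (ρ : R →ₗ[K] H ⊗[K] R) :
    (R ⊗[K] (R ⊗[K] R)) →ₗ[K] (R ⊗[K] R) ⊗[K] R :=
  (TensorProduct.map (actRR act) LinearMap.id) ∘ₗ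
  st16exch K H R (R ⊗[K] R) ∘ₗ
  (TensorProduct.map ρ LinearMap.id)

/-- `(g ⊗ g') ⊗ (p ⊗ q) ↦ g·p ⊗ g'·q`. -/
noncomputable def st16F (act : (H ⊗[K] R) →ₗ[K] R) :
    ((H ⊗[K] H) ⊗[K] (R ⊗[K] R)) →ₗ[K] R ⊗[K] R :=
  (TensorProduct.map act act) ∘ₗ
  (TensorProduct.tensorTensorTensorComm K H H R R).toLinearMap

lemma st16_Ltheta (act : (H ⊗[K] R) →ₗ[K] R) :
    (TensorProduct.map (actRR act) LinearMap.id) ∘ₗ st16exch K H R (R ⊗[K] R) =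
      (TensorProduct.map (st16F act) LinearMap.id) ∘ₗ
      st16exch K (H ⊗[K] H) R (R ⊗[K] R) ∘ₗ
      (TensorProduct.map (TensorProduct.map Coalgebra.comul LinearMap.id)
        LinearMap.id) := by
  apply TensorProduct.ext_threefold
  intro h w z
  simp [st16exch, st16F, actRR]

lemma st16c1_tmul (act : (H ⊗[K] R) →ₗ[K] R) (ρ : R →ₗ[K] H ⊗[K] R)
    (hcoassoc : (TensorProduct.map Coalgebra.comul LinearMap.id) ∘ₗ ρ =
      (TensorProduct.assoc K H H R).symm.toLinearMap ∘ₗ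
        (TensorProduct.map LinearMap.id ρ) ∘ₗ ρ)
    (v : R) (w : R ⊗[K] R) :
    st16c1 act ρ (v ⊗ₜ[K] w) =
      (TensorProduct.map (st16F act) LinearMap.id)
        (st16exch K (H ⊗[K] H) R (R ⊗[K] R)
          (((TensorProduct.assoc K H H R).symm
            ((TensorProduct.map LinearMap.id ρ) (ρ v))) ⊗ₜ[K] w)) := by
  have h1 : st16c1 act ρ (v ⊗ₜ[K] w) =
      ((TensorProduct.map (actRR act) LinearMap.id) ∘ₗ st16exch K H R (R ⊗[K] R))
        (ρ v ⊗ₜ[K] w) := by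
    simp [st16c1]
  rw [h1, st16_Ltheta]
  have h2 : (TensorProduct.map (TensorProduct.map Coalgebra.comul LinearMap.id)
      LinearMap.id) ((ρ v) ⊗ₜ[K] w) =
      ((TensorProduct.map Coalgebra.comul LinearMap.id) (ρ v)) ⊗ₜ[K] w := by
    simp
  have h3 := LinearMap.congr_fun hcoassoc v
  simp only [LinearMap.comp_apply] at h3 ⊢
  rw [h2, h3]
  rfl

end Aux3

section Aux4

variable {K H R : Type*} [CommRing K] [Ring H] [HopfAlgebra K H]
  [AddCommGroup R] [Module K R] [Coalgebra K R]

@[simp] lemma st16F_tmul (act : (H ⊗[K] R) →ₗ[K] R) (g g' : H) (p q : R) :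
    st16F act ((g ⊗ₜ[K] g') ⊗ₜ[K] (p ⊗ₜ[K] q)) =
      act (g ⊗ₜ[K] p) ⊗ₜ[K] act (g' ⊗ₜ[K] q) := by
  simp [st16F]

noncomputable def st16D (act : (H ⊗[K] R) →ₗ[K] R) (ρ : R →ₗ[K] H ⊗[K] R) :
    ((R ⊗[K] R) ⊗[K] (R ⊗[K] R)) →ₗ[K] (R ⊗[K] R) ⊗[K] (R ⊗[K] R) :=
  (TensorProduct.assoc K (R ⊗[K] R) R R).toLinearMap ∘ₗ
  (TensorProduct.map (st16c1 act ρ) LinearMap.id) ∘ₗ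
  (TensorProduct.assoc K R (R ⊗[K] R) R).symm.toLinearMap ∘ₗ
  (TensorProduct.map LinearMap.id (st16c1 act ρ)) ∘ₗ
  (TensorProduct.assoc K R R (R ⊗[K] R)).toLinearMap

lemma st16_I1 (act : (H ⊗[K] R) →ₗ[K] R) (ρ : R →ₗ[K] H ⊗[K] R)
    (hcoassoc : (TensorProduct.map Coalgebra.comul LinearMap.id) ∘ₗ ρ =
      (TensorProduct.assoc K H H R).symm.toLinearMap ∘ₗ
        (TensorProduct.map LinearMap.id ρ) ∘ₗ ρ) :
    midMap (braidRR act ρ) ∘ₗ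
      (TensorProduct.map (braidRR act ρ) (braidRR act ρ)) ∘ₗ
      midMap (braidRR act ρ) = st16D act ρ := by
  apply TensorProduct.ext_fourfold'
  intro a b p q
  simp only [LinearMap.comp_apply, st16D, LinearEquiv.coe_coe,
    TensorProduct.assoc_tmul, TensorProduct.map_tmul, LinearMap.id_coe, id_eq]
  rw [st16c1_tmul act ρ hcoassoc b (p ⊗ₜ[K] q)]
  rw [show (a ⊗ₜ[K] b) ⊗ₜ[K] (p ⊗ₜ[K] q)
      = st16Mid (a ⊗ₜ[K] ((b ⊗ₜ[K] p) ⊗ₜ[K] q)) from (st16Mid_tmul a b p q).symm]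
  rw [midMap_Mid, braidRR_tmul]
  generalize ρ b = s
  induction s using TensorProduct.induction_on with
  | zero => simp
  | add s t hs ht =>
    simp only [map_add, add_tmul, tmul_add] at hs ht ⊢
    rw [hs, ht]
  | tmul k b' =>
    simp only [st16exch_tmul, TensorProduct.map_tmul, LinearMap.id_coe, id_eq,
      st16Mid_tmul]
    rw [braidRR_tmul act ρ b' q]
    generalize ρ b' = s'
    induction s' using TensorProduct.induction_on with
    | zero => simp
    | add s' t' hs ht =>
      simp only [map_add, add_tmul, tmul_add] at hs ht ⊢
      rw [hs, ht]
    | tmul k' b'' =>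
      simp only [st16exch_tmul, TensorProduct.map_tmul, LinearMap.id_coe, id_eq,
        TensorProduct.assoc_symm_tmul, st16F_tmul]
      rw [braidRR_tmul act ρ a (act (k ⊗ₜ[K] p))]
      rw [st16c1_tmul act ρ hcoassoc a (act (k ⊗ₜ[K] p) ⊗ₜ[K] act (k' ⊗ₜ[K] q))]
      generalize ρ a = t
      induction t using TensorProduct.induction_on with
      | zero => simp
      | add t t' hs ht =>
        simp only [map_add, add_tmul, tmul_add] at hs ht ⊢
        rw [hs, ht]
      | tmul h a' =>
        simp only [st16exch_tmul, TensorProduct.map_tmul, LinearMap.id_coe, id_eq]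
        rw [show (act (h ⊗ₜ[K] act (k ⊗ₜ[K] p)) ⊗ₜ[K] a')
              ⊗ₜ[K] (act (k' ⊗ₜ[K] q) ⊗ₜ[K] b'')
            = st16Mid (act (h ⊗ₜ[K] act (k ⊗ₜ[K] p)) ⊗ₜ[K]
                ((a' ⊗ₜ[K] act (k' ⊗ₜ[K] q)) ⊗ₜ[K] b''))
          from (st16Mid_tmul _ _ _ _).symm]
        rw [midMap_Mid, braidRR_tmul]
        generalize ρ a' = t'
        induction t' using TensorProduct.induction_on with
        | zero => simp
        | add t t' hs ht =>
          simp only [map_add, add_tmul, tmul_add] at hs ht ⊢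
          rw [hs, ht]
        | tmul h' a'' =>
          simp only [st16exch_tmul, TensorProduct.map_tmul, LinearMap.id_coe,
            id_eq, TensorProduct.assoc_symm_tmul, st16F_tmul, st16Mid_tmul,
            TensorProduct.assoc_tmul]

end Aux4

section Aux5

variable {K H R : Type*} [CommRing K] [Ring H] [HopfAlgebra K H]
  [AddCommGroup R] [Module K R] [Coalgebra K R]

lemma st16_lemP (act : (H ⊗[K] R) →ₗ[K] R) (ρ : R →ₗ[K] H ⊗[K] R)
    (hcounit : (TensorProduct.lid K R).toLinearMap ∘ₗ
        (TensorProduct.map Coalgebra.counit LinearMap.id) ∘ₗ ρ = LinearMap.id)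
    (ω : (R ⊗[K] R) →ₗ[K] K)
    (hω : ∀ (h : H) (z : R ⊗[K] R),
      ω (actRR act (h ⊗ₜ[K] z)) = Coalgebra.counit (R := K) h * ω z) :
    (TensorProduct.map ω LinearMap.id) ∘ₗ st16c1 act ρ =
      (TensorProduct.map ω LinearMap.id) ∘ₗ (TensorProduct.comm K R (R ⊗[K] R)).toLinearMap := by
  apply TensorProduct.ext'
  intro v w
  have hv := LinearMap.congr_fun hcounit v
  simp only [LinearMap.comp_apply, LinearEquiv.coe_coe, LinearMap.id_coe, id_eq] at hv
  simp only [LinearMap.comp_apply, LinearEquiv.coe_coe, TensorProduct.comm_tmul,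
    TensorProduct.map_tmul, LinearMap.id_coe, id_eq]
  conv_rhs => rw [← hv]
  have h1 : st16c1 act ρ (v ⊗ₜ[K] w) =
      (TensorProduct.map (actRR act) LinearMap.id)
        (st16exch K H R (R ⊗[K] R) (ρ v ⊗ₜ[K] w)) := by
    simp [st16c1]
  rw [h1]
  generalize ρ v = t
  induction t using TensorProduct.induction_on with
  | zero => simp
  | add s t hs ht =>
    simp only [map_add, add_tmul, tmul_add] at hs ht ⊢
    rw [hs, ht]
  | tmul h r =>
    simp only [st16exch_tmul, TensorProduct.map_tmul, LinearMap.id_coe, id_eq,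
      TensorProduct.lid_tmul, hω]
    rw [tmul_smul, smul_tmul', smul_eq_mul, mul_comm]

lemma st16_I2 (act : (H ⊗[K] R) →ₗ[K] R) (ρ : R →ₗ[K] H ⊗[K] R)
    (hcounit : (TensorProduct.lid K R).toLinearMap ∘ₗ
        (TensorProduct.map Coalgebra.counit LinearMap.id) ∘ₗ ρ = LinearMap.id)
    (ω : (R ⊗[K] R) →ₗ[K] K)
    (hω : ∀ (h : H) (z : R ⊗[K] R),
      ω (actRR act (h ⊗ₜ[K] z)) = Coalgebra.counit (R := K) h * ω z)
    (μ : (R ⊗[K] R) →ₗ[K] R) :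
    (TensorProduct.lid K R).toLinearMap ∘ₗ (TensorProduct.map ω μ) ∘ₗ st16D act ρ =
      (TensorProduct.rid K R).toLinearMap ∘ₗ (TensorProduct.map μ ω) := by
  have lemP := st16_lemP act ρ hcounit ω hω
  apply TensorProduct.ext_fourfold'
  intro a b p q
  -- the "evaluation" map G
  set G : ((R ⊗[K] R) ⊗[K] R) →ₗ[K] R :=
    μ ∘ₗ (TensorProduct.map (LinearMap.toSpanSingleton K R a) LinearMap.id) ∘ₗ
      (TensorProduct.map ω LinearMap.id) with hG
  have hGtmul : ∀ (w : R ⊗[K] R) (b0 : R), G (w ⊗ₜ[K] b0) = ω w • μ (a ⊗ₜ[K] b0) := by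
    intro w b0
    simp only [hG, LinearMap.comp_apply, TensorProduct.map_tmul, LinearMap.id_coe,
      id_eq, LinearMap.toSpanSingleton_apply]
    rw [← TensorProduct.smul_tmul', map_smul]
  -- keyA : evaluate lid∘(map ω μ)∘assoc
  have keyA : ∀ (u : (R ⊗[K] R) ⊗[K] R) (b0 : R),
      (TensorProduct.lid K R) ((TensorProduct.map ω μ)
        ((TensorProduct.assoc K (R ⊗[K] R) R R) (u ⊗ₜ[K] b0))) =
      μ (((TensorProduct.lid K R) ((TensorProduct.map ω LinearMap.id) u)) ⊗ₜ[K] b0) := by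
    intro u b0
    induction u using TensorProduct.induction_on with
    | zero => simp
    | add s t hs ht => simp only [map_add, add_tmul] at hs ht ⊢; rw [hs, ht]
    | tmul w v =>
      simp only [LinearEquiv.coe_coe, TensorProduct.assoc_tmul, TensorProduct.map_tmul,
        LinearMap.id_coe, id_eq, TensorProduct.lid_tmul]
      rw [← TensorProduct.smul_tmul', map_smul]
  -- step1 : replace the outer c1 by comm
  have step1 : ∀ (W : (R ⊗[K] R) ⊗[K] R),
      (TensorProduct.lid K R) ((TensorProduct.map ω μ)
        ((TensorProduct.assoc K (R ⊗[K] R) R R)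
          ((TensorProduct.map (st16c1 act ρ) LinearMap.id)
            ((TensorProduct.assoc K R (R ⊗[K] R) R).symm (a ⊗ₜ[K] W))))) = G W := by
    intro W
    induction W using TensorProduct.induction_on with
    | zero => simp
    | add s t hs ht => simp only [map_add, tmul_add] at hs ht ⊢; rw [hs, ht]
    | tmul w b0 =>
      simp only [TensorProduct.assoc_symm_tmul, TensorProduct.map_tmul,
        LinearMap.id_coe, id_eq]
      rw [keyA, hGtmul]
      have := LinearMap.congr_fun lemP (a ⊗ₜ[K] w)
      simp only [LinearMap.comp_apply, LinearEquiv.coe_coe,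
        TensorProduct.comm_tmul, TensorProduct.map_tmul, LinearMap.id_coe, id_eq] at this
      rw [this]
      simp only [TensorProduct.lid_tmul]
      rw [← TensorProduct.smul_tmul', map_smul]
  -- now the main computation
  simp only [LinearMap.comp_apply, st16D, LinearEquiv.coe_coe,
    TensorProduct.assoc_tmul, TensorProduct.map_tmul, LinearMap.id_coe, id_eq]
  rw [step1]
  have step2 : G (st16c1 act ρ (b ⊗ₜ[K] (p ⊗ₜ[K] q))) =
      G ((TensorProduct.comm K R (R ⊗[K] R)) (b ⊗ₜ[K] (p ⊗ₜ[K] q))) := by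
    have h1 := LinearMap.congr_fun lemP (b ⊗ₜ[K] (p ⊗ₜ[K] q))
    simp only [LinearMap.comp_apply, LinearEquiv.coe_coe] at h1
    simp only [hG, LinearMap.comp_apply]
    rw [h1]
  rw [step2]
  simp [hGtmul]

end Aux5


/-- Let `R` be a coalgebra in `{}^H_H 𝒴𝒟` with braiding `c`, and
`x, y ∈ R` with `c Δ(x) = Δ(x)`, `c Δ(y) = Δ(y)` and
`(R ⊗ c² ⊗ R)(Δ ⊗ Δ)(x ⊗ y) = (Δ ⊗ Δ)(x ⊗ y)`.  Then for any left `H`-linear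
`ω : R ⊗ R → K` and any linear `μ : R ⊗ R → R`, one has
`(ω * μ)(x ⊗ y) = (μ * ω)(x ⊗ y)`. -/
theorem conv_comm_of_cocommutative {K H R : Type*} [CommRing K] [Ring H]
    [HopfAlgebra K H] [AddCommGroup R] [Module K R] [Coalgebra K R]
    (act : (H ⊗[K] R) →ₗ[K] R) (ρ : R →ₗ[K] H ⊗[K] R)
    (hact_one : ∀ z : R, act ((1 : H) ⊗ₜ[K] z) = z)
    (hact_mul : ∀ (g h : H) (z : R),
      act ((g * h) ⊗ₜ[K] z) = act (g ⊗ₜ[K] act (h ⊗ₜ[K] z)))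
    (hcounit : (TensorProduct.lid K R).toLinearMap ∘ₗ
        (TensorProduct.map Coalgebra.counit LinearMap.id) ∘ₗ ρ = LinearMap.id)
    (hcoassoc : (TensorProduct.map Coalgebra.comul LinearMap.id) ∘ₗ ρ =
      (TensorProduct.assoc K H H R).symm.toLinearMap ∘ₗ
        (TensorProduct.map LinearMap.id ρ) ∘ₗ ρ)
    (x y : R)
    (hx : braidRR act ρ (Coalgebra.comul x) = Coalgebra.comul x)
    (hy : braidRR act ρ (Coalgebra.comul y) = Coalgebra.comul y)
    (hxy : midMap ((braidRR act ρ) ∘ₗ (braidRR act ρ))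
        ((TensorProduct.map Coalgebra.comul Coalgebra.comul) (x ⊗ₜ[K] y)) =
      (TensorProduct.map Coalgebra.comul Coalgebra.comul) (x ⊗ₜ[K] y))
    (ω : (R ⊗[K] R) →ₗ[K] K)
    (hω : ∀ (h : H) (z : R ⊗[K] R),
      ω (actRR act (h ⊗ₜ[K] z)) = Coalgebra.counit (R := K) h * ω z)
    (μ : (R ⊗[K] R) →ₗ[K] R) :
    ((TensorProduct.lid K R).toLinearMap ∘ₗ (TensorProduct.map ω μ) ∘ₗ
        comulRR act ρ) (x ⊗ₜ[K] y) =
      ((TensorProduct.rid K R).toLinearMap ∘ₗ (TensorProduct.map μ ω) ∘ₗ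
        comulRR act ρ) (x ⊗ₜ[K] y) := by
  -- the element z = Δ_{R⊗R}(x ⊗ y) is fixed by st16D
  have hz : comulRR act ρ (x ⊗ₜ[K] y) =
      midMap (braidRR act ρ)
        ((TensorProduct.map Coalgebra.comul Coalgebra.comul) (x ⊗ₜ[K] y)) := by
    simp [comulRR]
  have hcc : (TensorProduct.map (braidRR act ρ) (braidRR act ρ))
      ((TensorProduct.map Coalgebra.comul Coalgebra.comul) (x ⊗ₜ[K] y)) =
      (TensorProduct.map Coalgebra.comul Coalgebra.comul) (x ⊗ₜ[K] y) := by
    simp only [TensorProduct.map_tmul, hx, hy]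
  have hΨΨ : midMap (braidRR act ρ) (midMap (braidRR act ρ)
      ((TensorProduct.map Coalgebra.comul Coalgebra.comul) (x ⊗ₜ[K] y))) =
      (TensorProduct.map Coalgebra.comul Coalgebra.comul) (x ⊗ₜ[K] y) := by
    rw [← LinearMap.comp_apply, ← midMap_comp]
    exact hxy
  have hfix : st16D act ρ (comulRR act ρ (x ⊗ₜ[K] y)) = comulRR act ρ (x ⊗ₜ[K] y) := by
    rw [← st16_I1 act ρ hcoassoc]
    simp only [LinearMap.comp_apply, hz]
    rw [hΨΨ, hcc]
  have hI2 := LinearMap.congr_fun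
    (st16_I2 act ρ hcounit ω hω μ) (comulRR act ρ (x ⊗ₜ[K] y))
  simp only [LinearMap.comp_apply] at hI2 ⊢
  rw [← hfix, hI2, hfix]
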